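/- The polynomial 1 - x² lies in the quadratic module generated by 1 - x^{2q}, truncated at degree 2q; that is, there exist a sum of squares σ₀ of degree at most 2q and a nonnegative constant c such that 1 - x² = σ₀ + c·(1 - x^{2q}). -/

import Mathlib

open Polynomial

lemma sq_mul_isSumSq {R : Type*} [CommRing R] (p : R) {s : R} (h : IsSumSq s) :
    IsSumSq (p ^ 2 * s) := by
  induction h with
  | zero => simpa using IsSumSq.zero
  | @sq_add a S pS ih =>
    have : p ^ 2 * (a * a + S) = (p * a) * (p * a) + p ^ 2 * S := by ring
    rw [this]
    exact IsSumSq.sq_add _ ih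

theorem stmt_3 (q : ℕ) (hq : 1 ≤ q) :
    ∃ σ₀ : ℝ[X], IsSumSq σ₀ ∧ σ₀.natDegree ≤ 2 * q ∧
      ∃ c : ℝ, 0 ≤ c ∧ (1 - X ^ 2 : ℝ[X]) = σ₀ + C c * (1 - X ^ (2 * q)) := by
  induction q, hq using Nat.le_induction with
  | base =>
    refine ⟨0, IsSumSq.zero, by simp, 1, zero_le_one, by simp⟩
  | succ n hn ih =>
    obtain ⟨σ₀, hσ, hdeg, c, hc, heq⟩ := ih
    have hc1 : (0:ℝ) < 1 + c := by linarith
    set r : ℝ := 1 / (1 + c) with hr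
    have hr0 : 0 ≤ r := by positivity
    refine ⟨C r * ((1 - X ^ 2) ^ 2 + X ^ 2 * σ₀), ?_, ?_, c * r, by positivity, ?_⟩
    · have : C r * ((1 - X ^ 2) ^ 2 + X ^ 2 * σ₀)
          = (C (Real.sqrt r)) ^ 2 * ((1 - X ^ 2) ^ 2 + X ^ 2 * σ₀) := by
        rw [← C_pow, Real.sq_sqrt hr0]
      rw [this]
      apply sq_mul_isSumSq
      refine IsSumSq.add ?_ (sq_mul_isSumSq X hσ)
      have : ((1 - X ^ 2 : ℝ[X])) ^ 2 = (1 - X^2) * (1 - X^2) + 0 := by ring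
      rw [this]; exact IsSumSq.sq_add _ IsSumSq.zero
    · refine (natDegree_C_mul_le _ _).trans ((natDegree_add_le _ _).trans ?_)
      apply max_le
      · refine (natDegree_pow_le).trans ?_
        have : (1 - X ^ 2 : ℝ[X]).natDegree ≤ 2 := by compute_degree
        omega
      · refine (natDegree_mul_le).trans ?_
        have : (X ^ 2 : ℝ[X]).natDegree ≤ 2 := natDegree_X_pow_le 2
        omega
    · have hinv : (1 + c) * r = 1 := mul_one_div_cancel hc1.ne'
      have key : C (1 + c) * (1 - X ^ 2)
          = ((1 - X ^ 2) ^ 2 + X ^ 2 * σ₀) + C c * (1 - X ^ (2 * (n + 1))) := by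
        have hx : (X : ℝ[X]) ^ (2 * (n + 1)) = X ^ (2 * n) * X ^ 2 := by ring
        rw [hx, C_add, C_1]
        linear_combination (X ^ 2 : ℝ[X]) * heq
      calc (1 - X ^ 2 : ℝ[X]) = C r * (C (1 + c) * (1 - X ^ 2)) := by
            rw [← mul_assoc, ← C_mul, mul_comm r, hinv, C_1, one_mul]
        _ = C r * ((1 - X ^ 2) ^ 2 + X ^ 2 * σ₀) + C (c * r) * (1 - X ^ (2 * (n + 1))) := by
            rw [key]; rw [C_mul]; ring
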